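/- Let A be an l × n matrix with integer entries and columns a_1, ..., a_n ∈ ℤ^l. The following are equivalent: (1) for every IP-set Y ⊆ ℕ and every finite coloring of Y, there exist pairwise distinct x_1, ..., x_n ∈ Y, all of the same color, with x_1 a_1 + ⋯ + x_n a_n = 0; (2) there exist m ∈ ℕ and subsets I_1, ..., I_m ⊆ {1,...,n} such that I_1 ∪ ⋯ ∪ I_m = {1,...,n}, for every j ∈ {1,...,m} Σ_{i ∈ I_j} a_i = 0, and for all i ≠ i' in {1,...,n} there exists j ∈ {1,...,m} such that exactly one of i, i' belongs to I_j. -/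

import Mathlib

/-- `FSk k x` is the set of all finite sums `∑ εᵢ xᵢ` with each `εᵢ ∈ {0,…,k-1}`,
excluding `0`.  For `k = 2` this is the usual set `FS` of finite sums. -/
def FSk (k : ℕ) (x : ℕ → ℕ) : Set ℕ :=
  {s | ∃ n : ℕ, ∃ ε : Fin n → ℕ, (∀ i, ε i < k) ∧ s = ∑ i, ε i * x i} \ {0}

/-- A `k`-IP-set; for `k = 2` this is an IP-set. -/
def IsKIPSet (k : ℕ) (A : Set ℕ) : Prop :=
  ∃ x : ℕ → ℕ, StrictMono x ∧ (∀ i, 0 < x i) ∧ FSk k x ⊆ A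

open Finset


-- L5: superincreasing subset-sum injectivity
lemma superinc_inj (y : ℕ → ℕ) (hy : ∀ N, ∑ k ∈ range N, y k < y N) :
    ∀ N (S T : Finset ℕ), S ⊆ range N → T ⊆ range N →
      (∑ k ∈ S, y k) = (∑ k ∈ T, y k) → S = T := by
  intro N
  induction N with
  | zero => intro S T hS hT _
            simp only [range_zero, subset_empty] at hS hT; rw [hS, hT]
  | succ N ih =>
    intro S T hS hT hsum
    have hsub : ∀ U : Finset ℕ, U ⊆ range (N+1) → U.erase N ⊆ range N := by
      intro U hU k hk
      have := hU (mem_of_mem_erase hk)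
      simp only [mem_range] at this ⊢
      have := Finset.ne_of_mem_erase hk
      omega
    have hbound : ∀ U : Finset ℕ, U ⊆ range N → ∑ k ∈ U, y k < y N := by
      intro U hU
      exact lt_of_le_of_lt (Finset.sum_le_sum_of_subset hU) (hy N)
    by_cases hNS : N ∈ S <;> by_cases hNT : N ∈ T
    · have h1 := Finset.add_sum_erase _ y hNS
      have h2 := Finset.add_sum_erase _ y hNT
      have := ih (S.erase N) (T.erase N) (hsub S hS) (hsub T hT) (by omega)
      rw [← Finset.insert_erase hNS, ← Finset.insert_erase hNT, this]
    · exfalso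
      have h1 : y N ≤ ∑ k ∈ S, y k := Finset.single_le_sum (fun _ _ => Nat.zero_le _) hNS
      have h2 : T ⊆ range N := fun k hk => by
        have := hT hk; simp only [mem_range] at this ⊢
        rcases Nat.lt_succ_iff_lt_or_eq.mp this with h | h
        · exact h
        · exact absurd (h ▸ hk) hNT
      have := hbound T h2
      omega
    · exfalso
      have h1 : y N ≤ ∑ k ∈ T, y k := Finset.single_le_sum (fun _ _ => Nat.zero_le _) hNT
      have h2 : S ⊆ range N := fun k hk => by
        have := hS hk; simp only [mem_range] at this ⊢
        rcases Nat.lt_succ_iff_lt_or_eq.mp this with h | h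
        · exact h
        · exact absurd (h ▸ hk) hNS
      have := hbound S h2
      omega
    · have h2 : T ⊆ range N := fun k hk => by
        have := hT hk; simp only [mem_range] at this ⊢
        rcases Nat.lt_succ_iff_lt_or_eq.mp this with h | h
        · exact h
        · exact absurd (h ▸ hk) hNT
      have h3 : S ⊆ range N := fun k hk => by
        have := hS hk; simp only [mem_range] at this ⊢
        rcases Nat.lt_succ_iff_lt_or_eq.mp this with h | h
        · exact h
        · exact absurd (h ▸ hk) hNS
      exact ih S T h3 h2 hsum

lemma superinc_inj' (y : ℕ → ℕ) (hy : ∀ N, ∑ k ∈ range N, y k < y N)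
    {S T : Finset ℕ} (h : (∑ k ∈ S, y k) = (∑ k ∈ T, y k)) : S = T := by
  classical
  obtain ⟨N, hN⟩ : ∃ N, S ⊆ range N ∧ T ⊆ range N := by
    refine ⟨(S ∪ T).sup id + 1, fun k hk => ?_, fun k hk => ?_⟩ <;>
      · simp only [mem_range]
        have : k ≤ (S ∪ T).sup id := Finset.le_sup (f := id) (by simp [hk])
        omega
  exact superinc_inj y hy N S T hN.1 hN.2 h

-- powers are superincreasing
lemma pow_superinc {B : ℕ} (hB : 2 ≤ B) : ∀ N, ∑ k ∈ range N, B ^ k < B ^ N := by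
  intro N
  induction N with
  | zero => simp
  | succ N ih =>
    rw [Finset.sum_range_succ, pow_succ]
    have : 0 < B ^ N := pow_pos (by omega : 0 < B) N
    nlinarith

-- L2: digit vanishing
lemma digit_zero (B : ℤ) (hB : 0 < B) :
    ∀ N (v : ℕ → ℤ), (∀ k, |v k| < B) → (∑ k ∈ range N, B ^ k * v k) = 0 →
      ∀ k < N, v k = 0 := by
  intro N
  induction N with
  | zero => intro v _ _ k hk; omega
  | succ N ih =>
    intro v hv heq
    rw [Finset.sum_range_succ'] at heq
    have h1 : (∑ k ∈ range N, B ^ (k+1) * v (k+1)) = B * ∑ k ∈ range N, B ^ k * v (k+1) := by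
      rw [Finset.mul_sum]; exact Finset.sum_congr rfl fun k _ => by ring
    simp only [pow_zero, one_mul] at heq
    rw [h1] at heq
    have hdvd : B ∣ v 0 := ⟨-(∑ k ∈ range N, B ^ k * v (k+1)), by linarith⟩
    have hv0 : v 0 = 0 := Int.eq_zero_of_abs_lt_dvd hdvd (hv 0)
    have hsum0 : (∑ k ∈ range N, B ^ k * v (k+1)) = 0 := by
      have : B * (∑ k ∈ range N, B ^ k * v (k+1)) = 0 := by omega
      rcases mul_eq_zero.mp this with h | h
      · omega
      · exact h
    have := ih (fun k => v (k+1)) (fun k => hv (k+1)) hsum0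
    intro k hk
    cases k with
    | zero => exact hv0
    | succ k => exact this k (by omega)

lemma finset_to_FSk (x : ℕ → ℕ) (hx : ∀ k, 0 < x k) (S : Finset ℕ) (hS : S.Nonempty) :
    (∑ k ∈ S, x k) ∈ FSk 2 x := by
  classical
  constructor
  · obtain ⟨N, hN⟩ : ∃ N, S ⊆ range N := by
      refine ⟨S.sup id + 1, fun k hk => ?_⟩
      simp only [mem_range]
      have : k ≤ S.sup id := Finset.le_sup (f := id) hk
      omega
    refine ⟨N, fun i => if (i : ℕ) ∈ S then 1 else 0, fun i => by simp only []; split <;> omega, ?_⟩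
    rw [Fin.sum_univ_eq_sum_range (fun k => (if k ∈ S then 1 else 0) * x k) N]
    rw [show (∑ k ∈ range N, (if k ∈ S then 1 else 0) * x k)
        = ∑ k ∈ range N, (if k ∈ S then x k else 0) from
      Finset.sum_congr rfl fun k _ => by split <;> simp]
    rw [Finset.sum_ite_mem, Finset.inter_eq_right.mpr hN]
  · simp only [Set.mem_singleton_iff]
    have : 0 < ∑ k ∈ S, x k := Finset.sum_pos (fun k _ => hx k) hS
    omega

lemma FSk_parse {x : ℕ → ℕ} {s : ℕ} (hs : s ∈ FSk 2 x) :
    ∃ S : Finset ℕ, S.Nonempty ∧ s = ∑ k ∈ S, x k := by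
  classical
  obtain ⟨⟨N, ε, hε, hsum⟩, hne⟩ := hs
  simp only [Set.mem_singleton_iff] at hne
  refine ⟨(Finset.univ.filter fun i : Fin N => ε i = 1).image Fin.val, ?_, ?_⟩
  · rcases (Finset.univ.filter fun i : Fin N => ε i = 1).eq_empty_or_nonempty with h | h
    · exfalso
      apply hne
      rw [hsum]
      apply Finset.sum_eq_zero
      intro i _
      have : ε i = 0 := by
        have := hε i
        by_contra h'
        have : ε i = 1 := by omega
        have : i ∈ Finset.univ.filter fun i : Fin N => ε i = 1 := by simp [this]
        simp [h] at this
      simp [this]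
    · exact h.image _
  · rw [Finset.sum_image (fun a _ b _ h => Fin.val_injective h), hsum]
    rw [Finset.sum_filter]
    apply Finset.sum_congr rfl
    intro i _
    have := hε i
    split <;> rename_i h
    · rw [h, one_mul]
    · have : ε i = 0 := by omega
      simp [this]

lemma FSk_pos {x : ℕ → ℕ} (hx : ∀ k, 0 < x k) {s : ℕ} (hs : s ∈ FSk 2 x) : 0 < s := by
  have := hs.2
  simp only [Set.mem_singleton_iff] at this
  omega

-- FS parse
lemma FS_parse {a : Stream' ℕ} {m : ℕ} (h : m ∈ Hindman.FS a) :
    ∃ S : Finset ℕ, S.Nonempty ∧ m = ∑ k ∈ S, a.get k := by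
  induction h with
  | head' a => exact ⟨{0}, ⟨0, by simp⟩, by simp [Stream'.head]⟩
  | tail' a m h ih =>
    obtain ⟨S, hS, rfl⟩ := ih
    refine ⟨S.image (· + 1), hS.image _, ?_⟩
    rw [Finset.sum_image (fun a _ b _ h => by omega)]
    rfl
  | cons' a m h ih =>
    obtain ⟨S, hS, rfl⟩ := ih
    refine ⟨insert 0 (S.image (· + 1)), ⟨0, Finset.mem_insert_self _ _⟩, ?_⟩
    rw [Finset.sum_insert (by simp)]
    rw [Finset.sum_image (fun a _ b _ h => by omega)]
    rfl

lemma FS_sub_FSk (x : ℕ → ℕ) (hx : ∀ k, 0 < x k) :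
    Hindman.FS (x : Stream' ℕ) ⊆ FSk 2 x := by
  intro z hz
  obtain ⟨S, hS, rfl⟩ := FS_parse hz
  exact finset_to_FSk x hx S hS

theorem necessity (l n : ℕ) (A : Matrix (Fin l) (Fin n) ℤ)
    (H : ∀ Y : Set ℕ, IsKIPSet 2 Y → ∀ (r : ℕ) (c : ℕ → Fin r),
      ∃ x : Fin n → ℕ, Function.Injective x ∧ (∀ i, x i ∈ Y) ∧
        (∀ i i', c (x i) = c (x i')) ∧
        ∀ t : Fin l, ∑ i, (x i : ℤ) * A t i = 0) :
    (∃ m : ℕ, 0 < m ∧ ∃ I : Fin m → Finset (Fin n),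
      (∀ i : Fin n, ∃ j, i ∈ I j) ∧
      (∀ j, ∀ t : Fin l, ∑ i ∈ I j, A t i = 0) ∧
      ∀ i i' : Fin n, i ≠ i' →
        ∃ j, (i ∈ I j ∧ i' ∉ I j) ∨ (i ∉ I j ∧ i' ∈ I j)) := by
  classical
  set C : ℕ := ∑ p : Fin l × Fin n, (A p.1 p.2).natAbs with hC
  set B : ℕ := C + 2 with hBdef
  have hB2 : 2 ≤ B := by omega
  have hpow : ∀ k, 0 < (fun k => B ^ k) k := fun k => pow_pos (by omega) k
  have hmono : StrictMono (fun k => B ^ k) :=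
    fun a b h => Nat.pow_lt_pow_right (by omega) h
  obtain ⟨x, xinj, xmem, _, xeq⟩ :=
    H (FSk 2 (fun k => B ^ k)) ⟨_, hmono, hpow, subset_rfl⟩ 1 (fun _ => 0)
  choose S hSne hSsum using fun i => FSk_parse (xmem i)
  obtain ⟨N, hN⟩ : ∃ N, ∀ i, S i ⊆ range N := by
    refine ⟨(Finset.univ.sup fun i => (S i).sup id) + 1, fun i k hk => ?_⟩
    simp only [mem_range]
    have h1 : k ≤ (S i).sup id := Finset.le_sup (f := id) hk
    have h2 : (S i).sup id ≤ Finset.univ.sup fun i => (S i).sup id :=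
      Finset.le_sup (f := fun i => (S i).sup id) (Finset.mem_univ i)
    omega
  -- digit analysis
  have hdig : ∀ t : Fin l, ∀ k < N, (∑ i ∈ Finset.univ.filter (fun i => k ∈ S i), A t i) = 0 := by
    intro t
    apply digit_zero (B : ℤ) (by positivity) N
        (fun k => ∑ i ∈ Finset.univ.filter (fun i => k ∈ S i), A t i)
    · intro k
      calc |∑ i ∈ Finset.univ.filter (fun i => k ∈ S i), A t i|
          ≤ ∑ i ∈ Finset.univ.filter (fun i => k ∈ S i), |A t i| := Finset.abs_sum_le_sum_abs _ _
        _ ≤ ∑ i : Fin n, |A t i| := Finset.sum_le_sum_of_subset_of_nonneg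
              (Finset.filter_subset _ _) (fun _ _ _ => abs_nonneg _)
        _ ≤ (C : ℤ) := by
            rw [hC]
            push_cast
            rw [Fintype.sum_prod_type]
            exact Finset.single_le_sum (f := fun t' => ∑ i : Fin n, |A t' i|)
              (fun t' _ => Finset.sum_nonneg fun _ _ => abs_nonneg _) (Finset.mem_univ t)
        _ < (B : ℤ) := by exact_mod_cast (by omega : C < B)
    · rw [← xeq t]
      have hxi : ∀ i, (x i : ℤ) = ∑ k ∈ range N, (if k ∈ S i then (B:ℤ)^k else 0) := by
        intro i
        rw [Finset.sum_ite_mem, Finset.inter_eq_right.mpr (hN i), hSsum i]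
        push_cast
        rfl
      calc ∑ k ∈ range N, (B:ℤ)^k * (∑ i ∈ Finset.univ.filter (fun i => k ∈ S i), A t i)
          = ∑ k ∈ range N, ∑ i : Fin n, (if k ∈ S i then (B:ℤ)^k else 0) * A t i := by
            apply Finset.sum_congr rfl
            intro k _
            rw [Finset.mul_sum, Finset.sum_filter]
            apply Finset.sum_congr rfl
            intro i _
            split <;> simp
        _ = ∑ i : Fin n, ∑ k ∈ range N, (if k ∈ S i then (B:ℤ)^k else 0) * A t i :=
            Finset.sum_comm
        _ = ∑ i : Fin n, (x i : ℤ) * A t i := by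
            apply Finset.sum_congr rfl
            intro i _
            rw [hxi i, Finset.sum_mul]
  -- build I
  refine ⟨N + 1, by omega, fun j => Finset.univ.filter (fun i => (j : ℕ) ∈ S i), ?_, ?_, ?_⟩
  · intro i
    obtain ⟨k, hk⟩ := hSne i
    have hkN : k < N + 1 := by have := hN i hk; simp only [mem_range] at this; omega
    exact ⟨⟨k, hkN⟩, by simpa using hk⟩
  · intro j t
    have hj : (j : ℕ) < N + 1 := j.isLt
    rcases Nat.lt_or_ge (j : ℕ) N with h | h
    · exact hdig t j h
    · have hjN : (j : ℕ) = N := by omega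
      rw [Finset.sum_eq_zero]
      intro i hi
      exfalso
      simp only [Finset.mem_filter] at hi
      have := hN i hi.2
      simp only [mem_range] at this
      omega
  · intro i i' hii
    have hx : x i ≠ x i' := fun h => hii (xinj h)
    have hS : S i ≠ S i' := by
      intro h
      apply hx
      rw [hSsum i, hSsum i', h]
    obtain ⟨k, hk⟩ : ∃ k, ¬(k ∈ S i ↔ k ∈ S i') := by
      by_contra h
      push_neg at h
      exact hS (Finset.ext fun k => (h k))
    have hkN : k < N + 1 := by
      rcases Classical.em (k ∈ S i) with h | h
      · have := hN i h; simp only [mem_range] at this; omega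
      · have h' : k ∈ S i' := by tauto
        have := hN i' h'; simp only [mem_range] at this; omega
    refine ⟨⟨k, hkN⟩, ?_⟩
    simp only [Finset.mem_filter, Finset.mem_univ, true_and]
    tauto

theorem sufficiency (l n : ℕ) (A : Matrix (Fin l) (Fin n) ℤ)
    (h : ∃ m : ℕ, 0 < m ∧ ∃ I : Fin m → Finset (Fin n),
      (∀ i : Fin n, ∃ j, i ∈ I j) ∧
      (∀ j, ∀ t : Fin l, ∑ i ∈ I j, A t i = 0) ∧
      ∀ i i' : Fin n, i ≠ i' →
        ∃ j, (i ∈ I j ∧ i' ∉ I j) ∨ (i ∉ I j ∧ i' ∈ I j)) :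
    ∀ Y : Set ℕ, IsKIPSet 2 Y → ∀ (r : ℕ) (c : ℕ → Fin r),
      ∃ x : Fin n → ℕ, Function.Injective x ∧ (∀ i, x i ∈ Y) ∧
        (∀ i i', c (x i) = c (x i')) ∧
        ∀ t : Fin l, ∑ i, (x i : ℤ) * A t i = 0 := by
  classical
  obtain ⟨m, hm, I, hcov, hsum, hsep⟩ := h
  rintro Y ⟨x, hxmono, hxpos, hxY⟩ r c
  have hFSsub : Hindman.FS (x : Stream' ℕ) ⊆ FSk 2 x := FS_sub_FSk x hxpos
  -- Hindman
  set s : Set (Set ℕ) := Set.range (fun q : Fin r => {z | c z = q} ∩ Hindman.FS (x : Stream' ℕ))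
    with hs
  have sfin : s.Finite := Set.finite_range _
  have scov : Hindman.FS (x : Stream' ℕ) ⊆ ⋃₀ s := by
    intro z hz
    exact ⟨_, ⟨c z, rfl⟩, ⟨rfl, hz⟩⟩
  obtain ⟨cell, hcell, b, hb⟩ := Hindman.FS_partition_regular (x : Stream' ℕ) s sfin scov
  obtain ⟨q0, rfl⟩ := hcell
  have hbFS : Hindman.FS b ⊆ Hindman.FS (x : Stream' ℕ) := fun z hz => (hb hz).2
  have hbc : ∀ z ∈ Hindman.FS b, c z = q0 := fun z hz => (hb hz).1
  have hbpos : ∀ k, 0 < b.get k := by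
    intro k
    exact FSk_pos hxpos (hFSsub (hbFS (Hindman.FS.singleton b k)))
  -- blocks
  set nseq : ℕ → ℕ := fun j => Nat.rec 0 (fun _ nj => nj + (∑ k ∈ range nj, b.get k) + 1) j
    with hnseq
  have hnsucc : ∀ j, nseq (j+1) = nseq j + (∑ k ∈ range (nseq j), b.get k) + 1 := fun j => rfl
  have hnlt : ∀ j, nseq j < nseq (j+1) := fun j => by rw [hnsucc]; omega
  have hnmono : StrictMono nseq := strictMono_nat_of_lt_succ hnlt
  set y : ℕ → ℕ := fun j => ∑ k ∈ Finset.Ico (nseq j) (nseq (j+1)), b.get k with hy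
  have htel : ∀ j, (∑ j' ∈ range j, y j') = ∑ k ∈ range (nseq j), b.get k := by
    intro j
    induction j with
    | zero => simp [hnseq]
    | succ j ih =>
      rw [Finset.sum_range_succ, ih]
      have h2 : y j = ∑ k ∈ Finset.Ico (nseq j) (nseq (j+1)), b.get k := rfl
      rw [h2, Finset.range_eq_Ico, Finset.range_eq_Ico]
      exact Finset.sum_Ico_consecutive (fun k => b.get k) (Nat.zero_le _) (le_of_lt (hnlt j))
  have hsuper : ∀ j, (∑ j' ∈ range j, y j') < y j := by
    intro j
    rw [htel]
    have hcard : (Finset.Ico (nseq j) (nseq (j+1))).card ≤ y j := by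
      rw [hy]
      calc (Finset.Ico (nseq j) (nseq (j+1))).card
          = ∑ _k ∈ Finset.Ico (nseq j) (nseq (j+1)), 1 := by simp
        _ ≤ ∑ k ∈ Finset.Ico (nseq j) (nseq (j+1)), b.get k :=
            Finset.sum_le_sum fun k _ => hbpos k
    rw [Nat.card_Ico, hnsucc] at hcard
    omega
  -- subset sums of y are in FS b
  have hblocksum : ∀ J : Finset ℕ, (∑ j ∈ J, y j)
      = ∑ k ∈ J.biUnion (fun j => Finset.Ico (nseq j) (nseq (j+1))), b.get k := by
    intro J
    rw [Finset.sum_biUnion]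
    intro j hj j' hj' hne
    apply Finset.disjoint_left.mpr
    intro k hk hk'
    simp only [Finset.mem_Ico] at hk hk'
    rcases Nat.lt_or_ge j j' with h | h
    · have : nseq (j+1) ≤ nseq j' := hnmono.monotone (by omega : j + 1 ≤ j')
      omega
    · have hlt : j' < j := by omega
      have : nseq (j'+1) ≤ nseq j := hnmono.monotone (by omega : j' + 1 ≤ j)
      omega
  have hJFS : ∀ J : Finset ℕ, J.Nonempty → (∑ j ∈ J, y j) ∈ Hindman.FS b := by
    intro J hJ
    rw [hblocksum]
    apply Hindman.FS.finset_sum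
    obtain ⟨j, hj⟩ := hJ
    exact ⟨nseq j, Finset.mem_biUnion.mpr ⟨j, hj, Finset.mem_Ico.mpr ⟨le_refl _, hnlt j⟩⟩⟩
  -- the solution
  set J : Fin n → Finset ℕ :=
    fun i => (Finset.univ.filter (fun j : Fin m => i ∈ I j)).image Fin.val with hJ
  have hJne : ∀ i, (J i).Nonempty := by
    intro i
    obtain ⟨j, hj⟩ := hcov i
    exact ⟨(j : ℕ), Finset.mem_image.mpr ⟨j, Finset.mem_filter.mpr ⟨Finset.mem_univ _, hj⟩, rfl⟩⟩
  set xx : Fin n → ℕ := fun i => ∑ j ∈ J i, y j with hxx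
  have hxxFS : ∀ i, xx i ∈ Hindman.FS b := fun i => hJFS (J i) (hJne i)
  have hmemJ : ∀ (i : Fin n) (j : Fin m), (j : ℕ) ∈ J i ↔ i ∈ I j := by
    intro i j
    rw [hJ]
    simp only [Finset.mem_image, Finset.mem_filter, Finset.mem_univ, true_and]
    constructor
    · rintro ⟨j', hj', hval⟩
      have : j' = j := Fin.val_injective hval
      rwa [← this]
    · intro hj
      exact ⟨j, hj, rfl⟩
  refine ⟨xx, ?_, ?_, ?_, ?_⟩
  · intro i i' hii'
    by_contra hne
    obtain ⟨j, hj⟩ := hsep i i' hne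
    have hJeq : J i = J i' := superinc_inj' y hsuper hii'
    rcases hj with ⟨h1, h2⟩ | ⟨h1, h2⟩
    · have := (hmemJ i j).mpr h1
      rw [hJeq] at this
      exact h2 ((hmemJ i' j).mp this)
    · have := (hmemJ i' j).mpr h2
      rw [← hJeq] at this
      exact h1 ((hmemJ i j).mp this)
  · intro i
    exact hxY (hFSsub (hbFS (hxxFS i)))
  · intro i i'
    rw [hbc _ (hxxFS i), hbc _ (hxxFS i')]
  · intro t
    have hxxi : ∀ i, (xx i : ℤ) = ∑ j : Fin m, (if i ∈ I j then (y (j:ℕ) : ℤ) else 0) := by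
      intro i
      rw [hxx]
      push_cast
      rw [hJ, Finset.sum_image (fun a _ b _ h => Fin.val_injective h)]
      rw [Finset.sum_filter]
    calc ∑ i : Fin n, (xx i : ℤ) * A t i
        = ∑ i : Fin n, ∑ j : Fin m, (if i ∈ I j then (y (j:ℕ) : ℤ) else 0) * A t i := by
          apply Finset.sum_congr rfl
          intro i _
          rw [hxxi i, Finset.sum_mul]
      _ = ∑ j : Fin m, ∑ i : Fin n, (if i ∈ I j then (y (j:ℕ) : ℤ) else 0) * A t i :=
          Finset.sum_comm
      _ = ∑ j : Fin m, (y (j:ℕ) : ℤ) * ∑ i ∈ I j, A t i := by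
          apply Finset.sum_congr rfl
          intro j _
          rw [Finset.mul_sum]
          rw [show (∑ i ∈ I j, (y (j:ℕ) : ℤ) * A t i)
              = ∑ i ∈ Finset.univ.filter (· ∈ I j), (y (j:ℕ) : ℤ) * A t i from by
            congr 1
            simp [Finset.filter_mem_eq_inter]]
          rw [Finset.sum_filter]
          apply Finset.sum_congr rfl
          intro i _
          split <;> simp
      _ = 0 := by
          apply Finset.sum_eq_zero
          intro j _
          rw [hsum j t, mul_zero]

/-- Rado's theorem on IP-sets, version with pairwise distinct solutions: the system
`A x = 0` has a monochromatic solution with pairwise distinct entries for every finite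
coloring of any IP-set iff there are sets `I₁,…,I_m` covering `{1,…,n}` with
`∑_{i ∈ I_j} aᵢ = 0` for every `j`, which moreover separate points of `{1,…,n}`. -/
theorem stmt7 (l n : ℕ) (A : Matrix (Fin l) (Fin n) ℤ) :
    (∀ Y : Set ℕ, IsKIPSet 2 Y → ∀ (r : ℕ) (c : ℕ → Fin r),
      ∃ x : Fin n → ℕ, Function.Injective x ∧ (∀ i, x i ∈ Y) ∧
        (∀ i i', c (x i) = c (x i')) ∧
        ∀ t : Fin l, ∑ i, (x i : ℤ) * A t i = 0) ↔
    (∃ m : ℕ, 0 < m ∧ ∃ I : Fin m → Finset (Fin n),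
      (∀ i : Fin n, ∃ j, i ∈ I j) ∧
      (∀ j, ∀ t : Fin l, ∑ i ∈ I j, A t i = 0) ∧
      ∀ i i' : Fin n, i ≠ i' →
        ∃ j, (i ∈ I j ∧ i' ∉ I j) ∨ (i ∉ I j ∧ i' ∈ I j)) :=
  ⟨necessity l n A, sufficiency l n A⟩
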